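/- Second-moment bound for excess-loss variables. Suppose Assumptions N and B hold. Fix θ ∈ S^p_{1,+} and a measurable f: [−1,1] → ℝ with ‖f‖_∞ ≤ C+1, and set T_i = −(Y_i − f(θᵀX_i))² + (Y_i − f*(θ*ᵀX_i))² for i = 1,…,n. Then Σ_{i=1}^n E[T_i²] ≤ 2n · [(2C+1)² + 4σ²] · ( R(θ,f) − R(θ*, f*) ). -/

import Mathlib

open MeasureTheory Finset Set

/-- `S^p_{1,+}`: vectors `θ ∈ ℝ^p` with `‖θ‖₁ = 1` whose first nonzero coordinate is
positive. -/
def Sp1plus (p : ℕ) : Set (Fin p → ℝ) :=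
  {θ | (∑ j, |θ j| = 1) ∧ ∃ j, 0 < θ j ∧ ∀ i, i < j → θ i = 0}

/-- The quadratic risk `R(θ, f) = E[(Y − f(θᵀX))²]`. -/
noncomputable def quadRisk {p : ℕ} (P : Measure ((Fin p → ℝ) × ℝ))
    (θ : Fin p → ℝ) (f : ℝ → ℝ) : ℝ :=
  ∫ z, (z.2 - f (∑ j, θ j * z.1 j)) ^ 2 ∂P


open MeasureTheory Finset Set

lemma aux_excess_bound {α : Type*} (m : MeasurableSpace α) [mα : MeasurableSpace α]
    (hm : m ≤ mα) (P : Measure α) [IsProbabilityMeasure P]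
    (W D : α → ℝ) (b s2 : ℝ) (hb : 0 ≤ b) (hs2 : 0 ≤ s2)
    (hWmeas : Measurable W) (hDmeas : Measurable D)
    (hD_m : Measurable[m] D)
    (hDb : ∀ᵐ z ∂P, |D z| ≤ b)
    (hW2 : Integrable (fun z => W z ^ 2) P)
    (hcond0 : P[W | m] =ᵐ[P] 0)
    (hcond2 : P[(fun z => W z ^ 2) | m] ≤ᵐ[P] fun _ => s2) :
    (∫ z, (-(W z + D z) ^ 2 + W z ^ 2) ^ 2 ∂P ≤ (b ^ 2 + 4 * s2) * ∫ z, D z ^ 2 ∂P)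
    ∧ (∫ z, (W z + D z) ^ 2 ∂P - ∫ z, W z ^ 2 ∂P = ∫ z, D z ^ 2 ∂P) := by
  haveI : IsFiniteMeasure (P.trim hm) := by
    constructor
    rw [trim_measurableSet_eq hm (@MeasurableSet.univ _ m)]
    exact measure_lt_top P _
  have hWint : Integrable W P := by
    have hg : Integrable (fun z => W z ^ 2 + 1) P := hW2.add (integrable_const 1)
    refine hg.mono' (hWmeas.aestronglyMeasurable (μ := P))
      (Filter.Eventually.of_forall fun z => ?_)
    rw [Real.norm_eq_abs]
    nlinarith [sq_nonneg (|W z| - 1), sq_abs (W z)]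
  have hD2 : Integrable (fun z => D z ^ 2) P := by
    refine (integrable_const (b ^ 2)).mono' ((hDmeas.pow_const 2).aestronglyMeasurable (μ := P)) ?_
    filter_upwards [hDb] with z hz
    rw [Real.norm_eq_abs, abs_of_nonneg (sq_nonneg _)]
    nlinarith [sq_abs (D z), abs_nonneg (D z)]
  have hD4 : Integrable (fun z => D z ^ 4) P := by
    refine (integrable_const (b ^ 4)).mono' ((hDmeas.pow_const 4).aestronglyMeasurable (μ := P)) ?_
    filter_upwards [hDb] with z hz
    rw [Real.norm_eq_abs]
    have h1 : |D z| ^ 4 ≤ b ^ 4 := pow_le_pow_left₀ (abs_nonneg _) hz 4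
    have h2 : |D z| ^ 4 = D z ^ 4 := by
      rw [← abs_pow]; exact abs_of_nonneg (by positivity)
    rw [abs_of_nonneg (by positivity : (0:ℝ) ≤ D z ^ 4)]
    linarith
  have hWD : Integrable (fun z => D z * W z) P :=
    hWint.bdd_mul (hDmeas.aestronglyMeasurable (μ := P))
      (hDb.mono fun z hz => by rwa [Real.norm_eq_abs])
  have hWD3 : Integrable (fun z => D z ^ 3 * W z) P := by
    refine hWint.bdd_mul (c := b ^ 3) ((hDmeas.pow_const 3).aestronglyMeasurable (μ := P)) ?_
    filter_upwards [hDb] with z hz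
    rw [Real.norm_eq_abs, abs_pow]
    exact pow_le_pow_left₀ (abs_nonneg _) hz 3
  have hW2D2 : Integrable (fun z => D z ^ 2 * W z ^ 2) P := by
    refine hW2.bdd_mul (c := b ^ 2) ((hDmeas.pow_const 2).aestronglyMeasurable (μ := P)) ?_
    filter_upwards [hDb] with z hz
    rw [Real.norm_eq_abs, abs_pow]
    exact pow_le_pow_left₀ (abs_nonneg _) hz 2
  have hzero : ∀ g : α → ℝ, StronglyMeasurable[m] g →
      Integrable (fun z => g z * W z) P → ∫ z, g z * W z ∂P = 0 := by
    intro g hg hint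
    have h1 : P[g * W | m] =ᵐ[P] g * P[W | m] :=
      condExp_mul_of_stronglyMeasurable_left hg hint hWint
    have h3 : P[g * W | m] =ᵐ[P] 0 :=
      h1.trans (hcond0.mono fun z hz => by simp [Pi.mul_apply, hz])
    calc ∫ z, g z * W z ∂P = ∫ z, (P[g * W | m]) z ∂P := (integral_condExp hm).symm
    _ = ∫ z, (0 : α → ℝ) z ∂P := integral_congr_ae h3
    _ = 0 := by simp
  have hWD0 : ∫ z, D z * W z ∂P = 0 := hzero D hD_m.stronglyMeasurable hWD
  have hWD30 : ∫ z, D z ^ 3 * W z ∂P = 0 :=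
    hzero _ ((hD_m.pow_const 3).stronglyMeasurable) hWD3
  -- key second-moment bound for D² W²
  have hkey2 : ∫ z, D z ^ 2 * W z ^ 2 ∂P ≤ s2 * ∫ z, D z ^ 2 ∂P := by
    have hpull : P[(fun z => D z ^ 2) * (fun z => W z ^ 2) | m] =ᵐ[P]
        (fun z => D z ^ 2) * P[(fun z => W z ^ 2) | m] :=
      condExp_mul_of_stronglyMeasurable_left (hD_m.pow_const 2).stronglyMeasurable
        (by exact hW2D2) hW2
    have hI1 : Integrable ((fun z => D z ^ 2) * P[(fun z => W z ^ 2) | m]) P :=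
      integrable_condExp.congr hpull
    calc ∫ z, D z ^ 2 * W z ^ 2 ∂P
        = ∫ z, (P[(fun z => D z ^ 2) * (fun z => W z ^ 2) | m]) z ∂P :=
          (integral_condExp hm).symm
    _ = ∫ z, ((fun z => D z ^ 2) * P[(fun z => W z ^ 2) | m]) z ∂P :=
          integral_congr_ae hpull
    _ ≤ ∫ z, s2 * D z ^ 2 ∂P := by
        refine integral_mono_ae hI1 (hD2.const_mul s2) ?_
        filter_upwards [hcond2] with z h1
        simp only [Pi.mul_apply]
        calc D z ^ 2 * (P[(fun z => W z ^ 2) | m]) z ≤ D z ^ 2 * s2 :=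
              mul_le_mul_of_nonneg_left h1 (sq_nonneg _)
        _ = s2 * D z ^ 2 := mul_comm _ _
    _ = s2 * ∫ z, D z ^ 2 ∂P := integral_const_mul s2 _
  constructor
  · have hptw : (fun z => (-(W z + D z) ^ 2 + W z ^ 2) ^ 2)
        = fun z => D z ^ 4 + (4 * (D z ^ 3 * W z) + 4 * (D z ^ 2 * W z ^ 2)) :=
      funext fun z => by ring
    have hI1 : Integrable (fun z => 4 * (D z ^ 3 * W z)) P := hWD3.const_mul 4
    have hI2 : Integrable (fun z => 4 * (D z ^ 2 * W z ^ 2)) P := hW2D2.const_mul 4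
    have hI3 : Integrable (fun z => 4 * (D z ^ 3 * W z) + 4 * (D z ^ 2 * W z ^ 2)) P :=
      hI1.add hI2
    rw [hptw, integral_add hD4 hI3, integral_add hI1 hI2,
      integral_const_mul, integral_const_mul, hWD30, mul_zero]
    have h4 : ∫ z, D z ^ 4 ∂P ≤ b ^ 2 * ∫ z, D z ^ 2 ∂P := by
      rw [← integral_const_mul]
      refine integral_mono_ae hD4 (hD2.const_mul _) ?_
      filter_upwards [hDb] with z hz
      have h1 : D z ^ 2 ≤ b ^ 2 := by nlinarith [sq_abs (D z), abs_nonneg (D z)]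
      nlinarith [sq_nonneg (D z)]
    nlinarith [hkey2, h4]
  · have hadd : (fun z => (W z + D z) ^ 2)
        = fun z => W z ^ 2 + (2 * (D z * W z) + D z ^ 2) := funext fun z => by ring
    have hI1 : Integrable (fun z => 2 * (D z * W z)) P := hWD.const_mul 2
    have hI3 : Integrable (fun z => 2 * (D z * W z) + D z ^ 2) P := hI1.add hD2
    rw [hadd, integral_add hW2 hI3, integral_add hI1 hD2, integral_const_mul, hWD0, mul_zero]
    ring

/-- The sub-σ-algebra generated by the first coordinate. -/
def mX (p : ℕ) : MeasurableSpace ((Fin p → ℝ) × ℝ) :=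
  MeasurableSpace.comap Prod.fst inferInstance

/-- **Second-moment bound for excess-loss variables.** Under the single-index model
`Y = f*(θ*ᵀX) + W` with `E[W|X] = 0`, Assumption N (conditional moments of `W`) and
Assumption B (`‖X‖_∞ ≤ 1` a.s., `‖f*‖_∞ ≤ C`, `C ≥ 1`), for any `θ ∈ S^p_{1,+}` and
measurable `f` bounded by `C + 1`, the i.i.d. variables
`T_i = −(Y_i − f(θᵀX_i))² + (Y_i − f*(θ*ᵀX_i))²` satisfy
`∑_{i=1}^n E[T_i²] ≤ 2n[(2C+1)² + 4σ²] (R(θ,f) − R(θ*,f*))`. -/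
theorem excess_loss_second_moment_bound
    (p n : ℕ) (P : Measure ((Fin p → ℝ) × ℝ)) [IsProbabilityMeasure P]
    (hY2 : Integrable (fun z : (Fin p → ℝ) × ℝ => z.2 ^ 2) P)
    (σ L C : ℝ) (hσ : 0 < σ) (hL : 0 < L) (hC : 1 ≤ C)
    (fstar : ℝ → ℝ) (hfstarMeas : Measurable fstar)
    (θstar : Fin p → ℝ) (hθstar : θstar ∈ Sp1plus p)
    -- the model : `E[W | X] = 0` where `W = Y − f*(θ*ᵀX)`
    (hmodel : P[(fun z : (Fin p → ℝ) × ℝ => z.2 - fstar (∑ j, θstar j * z.1 j)) |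
        MeasurableSpace.comap Prod.fst inferInstance] =ᵐ[P] 0)
    -- Assumption N
    (hN : ∀ k : ℕ, 2 ≤ k →
      P[(fun z : (Fin p → ℝ) × ℝ => |z.2 - fstar (∑ j, θstar j * z.1 j)| ^ k) |
          MeasurableSpace.comap Prod.fst inferInstance] ≤ᵐ[P]
        fun _ => (Nat.factorial k : ℝ) / 2 * σ ^ 2 * L ^ (k - 2))
    -- Assumption B
    (hBX : ∀ᵐ z ∂P, ∀ j, |z.1 j| ≤ 1)
    (hBf : ∀ t ∈ Set.Icc (-1 : ℝ) 1, |fstar t| ≤ C)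
    -- the fixed pair `(θ, f)` with `‖f‖_∞ ≤ C + 1`
    (θ : Fin p → ℝ) (hθ : θ ∈ Sp1plus p)
    (f : ℝ → ℝ) (hfMeas : Measurable f) (hfBdd : ∀ t ∈ Set.Icc (-1 : ℝ) 1, |f t| ≤ C + 1) :
    ∑ i : Fin n,
        ∫ d, (-((d i).2 - f (∑ j, θ j * (d i).1 j)) ^ 2 +
              ((d i).2 - fstar (∑ j, θstar j * (d i).1 j)) ^ 2) ^ 2
          ∂(Measure.pi fun _ : Fin n => P) ≤
      2 * n * ((2 * C + 1) ^ 2 + 4 * σ ^ 2) *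
        (quadRisk P θ f - quadRisk P θstar fstar) := by

  classical
  have hm : mX p ≤ (inferInstance : MeasurableSpace ((Fin p → ℝ) × ℝ)) :=
    measurable_fst.comap_le
  -- measurability of the dot products and composed functions
  have hdotMeas : ∀ τ : Fin p → ℝ, Measurable fun x : Fin p → ℝ => ∑ j, τ j * x j := fun τ =>
    Finset.measurable_sum _ fun j _ => (measurable_pi_apply (X := fun _ : Fin p => ℝ) j).const_mul (τ j)
  have hGsMeas : Measurable fun z : (Fin p → ℝ) × ℝ => fstar (∑ j, θstar j * z.1 j) :=
    (hfstarMeas.comp (hdotMeas θstar)).comp measurable_fst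
  have hGMeas : Measurable fun z : (Fin p → ℝ) × ℝ => f (∑ j, θ j * z.1 j) :=
    (hfMeas.comp (hdotMeas θ)).comp measurable_fst
  have hWmeas : Measurable fun z : (Fin p → ℝ) × ℝ => z.2 - fstar (∑ j, θstar j * z.1 j) :=
    measurable_snd.sub hGsMeas
  have hDmeas : Measurable fun z : (Fin p → ℝ) × ℝ =>
      fstar (∑ j, θstar j * z.1 j) - f (∑ j, θ j * z.1 j) := hGsMeas.sub hGMeas
  have hfst_m : Measurable[mX p] (Prod.fst : (Fin p → ℝ) × ℝ → (Fin p → ℝ)) :=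
    fun s hs => ⟨s, hs, rfl⟩
  have hD_m : Measurable[mX p] fun z : (Fin p → ℝ) × ℝ =>
      fstar (∑ j, θstar j * z.1 j) - f (∑ j, θ j * z.1 j) :=
    ((hfstarMeas.comp (hdotMeas θstar)).sub (hfMeas.comp (hdotMeas θ))).comp hfst_m
  -- a.e. bounds
  have hdot_le : ∀ᵐ z ∂P, ∀ τ : Fin p → ℝ, (∑ j, |τ j| = 1) → |∑ j, τ j * z.1 j| ≤ 1 := by
    filter_upwards [hBX] with z hz τ hτ
    calc |∑ j, τ j * z.1 j| ≤ ∑ j, |τ j * z.1 j| := Finset.abs_sum_le_sum_abs _ _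
    _ ≤ ∑ j, |τ j| := Finset.sum_le_sum fun j _ => by
        rw [abs_mul]; exact mul_le_of_le_one_right (abs_nonneg _) (hz j)
    _ = 1 := hτ
  have hGs_b : ∀ᵐ z ∂P, |fstar (∑ j, θstar j * z.1 j)| ≤ C := by
    filter_upwards [hdot_le] with z hz
    exact hBf _ (abs_le.mp (hz θstar hθstar.1))
  have hG_b : ∀ᵐ z ∂P, |f (∑ j, θ j * z.1 j)| ≤ C + 1 := by
    filter_upwards [hdot_le] with z hz
    exact hfBdd _ (abs_le.mp (hz θ hθ.1))
  have hDb : ∀ᵐ z ∂P, |fstar (∑ j, θstar j * z.1 j) - f (∑ j, θ j * z.1 j)| ≤ 2 * C + 1 := by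
    filter_upwards [hGs_b, hG_b] with z h1 h2
    calc |fstar (∑ j, θstar j * z.1 j) - f (∑ j, θ j * z.1 j)|
        ≤ |fstar (∑ j, θstar j * z.1 j)| + |f (∑ j, θ j * z.1 j)| := abs_sub _ _
    _ ≤ 2 * C + 1 := by linarith
  -- integrability of W²
  have hW2 : Integrable (fun z : (Fin p → ℝ) × ℝ =>
      (z.2 - fstar (∑ j, θstar j * z.1 j)) ^ 2) P := by
    have hg : Integrable (fun z : (Fin p → ℝ) × ℝ => 2 * z.2 ^ 2 + 2 * C ^ 2) P :=
      (hY2.const_mul 2).add (integrable_const _)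
    refine hg.mono' ((hWmeas.pow_const 2).aestronglyMeasurable (μ := P)) ?_
    filter_upwards [hGs_b] with z hz
    rw [Real.norm_eq_abs, abs_of_nonneg (sq_nonneg _)]
    nlinarith [sq_nonneg (z.2 + fstar (∑ j, θstar j * z.1 j)), sq_abs (fstar (∑ j, θstar j * z.1 j)), abs_nonneg (fstar (∑ j, θstar j * z.1 j))]
  -- conditional second moment bound from Assumption N
  have hcond2 : P[(fun z : (Fin p → ℝ) × ℝ => (z.2 - fstar (∑ j, θstar j * z.1 j)) ^ 2) | mX p]
      ≤ᵐ[P] fun _ => σ ^ 2 := by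
    have hN2 := hN 2 le_rfl
    have e2 : (fun z : (Fin p → ℝ) × ℝ => |z.2 - fstar (∑ j, θstar j * z.1 j)| ^ 2)
        = fun z => (z.2 - fstar (∑ j, θstar j * z.1 j)) ^ 2 := funext fun z => sq_abs _
    rw [e2] at hN2
    refine hN2.trans (Filter.Eventually.of_forall fun z => le_of_eq ?_)
    norm_num [Nat.factorial]
  have hmodel' : P[(fun z : (Fin p → ℝ) × ℝ => z.2 - fstar (∑ j, θstar j * z.1 j)) | mX p]
      =ᵐ[P] 0 := hmodel
  -- main estimates from the auxiliary lemma
  obtain ⟨hbound, hrisk⟩ := aux_excess_bound (mX p) hm P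
    (fun z : (Fin p → ℝ) × ℝ => z.2 - fstar (∑ j, θstar j * z.1 j))
    (fun z : (Fin p → ℝ) × ℝ => fstar (∑ j, θstar j * z.1 j) - f (∑ j, θ j * z.1 j))
    (2 * C + 1) (σ ^ 2) (by linarith) (by positivity)
    hWmeas hDmeas hD_m hDb hW2 hmodel' hcond2
  -- rewrite the risk difference
  have e1 : (fun z : (Fin p → ℝ) × ℝ =>
      ((z.2 - fstar (∑ j, θstar j * z.1 j)) + (fstar (∑ j, θstar j * z.1 j) - f (∑ j, θ j * z.1 j))) ^ 2)
      = fun z : (Fin p → ℝ) × ℝ => (z.2 - f (∑ j, θ j * z.1 j)) ^ 2 := funext fun z => by ring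
  have hRR : quadRisk P θ f - quadRisk P θstar fstar
      = ∫ z, (fstar (∑ j, θstar j * z.1 j) - f (∑ j, θ j * z.1 j)) ^ 2 ∂P := by
    rw [← hrisk]
    congr 1
    rw [quadRisk, ← e1]
  -- rewrite the integrand of the second moment
  have e3 : (fun z : (Fin p → ℝ) × ℝ =>
      (-(z.2 - f (∑ j, θ j * z.1 j)) ^ 2 + (z.2 - fstar (∑ j, θstar j * z.1 j)) ^ 2) ^ 2)
      = fun z : (Fin p → ℝ) × ℝ =>
      (-((z.2 - fstar (∑ j, θstar j * z.1 j)) + (fstar (∑ j, θstar j * z.1 j) - f (∑ j, θ j * z.1 j))) ^ 2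
        + (z.2 - fstar (∑ j, θstar j * z.1 j)) ^ 2) ^ 2 := funext fun z => by ring
  have hT2 : ∫ z, (-(z.2 - f (∑ j, θ j * z.1 j)) ^ 2 + (z.2 - fstar (∑ j, θstar j * z.1 j)) ^ 2) ^ 2 ∂P
      ≤ ((2 * C + 1) ^ 2 + 4 * σ ^ 2) *
        ∫ z, (fstar (∑ j, θstar j * z.1 j) - f (∑ j, θ j * z.1 j)) ^ 2 ∂P := by
    rw [e3]; exact hbound
  -- marginal of the product measure
  have hmap : ∀ i : Fin n, Measure.map (fun d : Fin n → (Fin p → ℝ) × ℝ => d i)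
      (Measure.pi fun _ : Fin n => P) = P := by
    intro i
    refine Measure.ext fun s hs => ?_
    rw [Measure.map_apply (measurable_pi_apply i) hs]
    rw [show (fun d : Fin n → (Fin p → ℝ) × ℝ => d i) ⁻¹' s
        = Set.pi Set.univ (Function.update (fun _ => Set.univ) i s) from Set.eval_preimage,
      Measure.pi_pi]
    rw [Finset.prod_eq_single_of_mem i (Finset.mem_univ i)
      (fun j _ hj => by simp [Function.update_of_ne hj]), Function.update_self]
  have hTmeas : Measurable fun z : (Fin p → ℝ) × ℝ =>
      (-(z.2 - f (∑ j, θ j * z.1 j)) ^ 2 + (z.2 - fstar (∑ j, θstar j * z.1 j)) ^ 2) ^ 2 :=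
    ((((measurable_snd.sub hGMeas).pow_const 2).neg.add (hWmeas.pow_const 2)).pow_const 2)
  have heach : ∀ i : Fin n,
      (∫ d, (-((d i).2 - f (∑ j, θ j * (d i).1 j)) ^ 2 +
              ((d i).2 - fstar (∑ j, θstar j * (d i).1 j)) ^ 2) ^ 2
          ∂(Measure.pi fun _ : Fin n => P))
      = ∫ z, (-(z.2 - f (∑ j, θ j * z.1 j)) ^ 2 + (z.2 - fstar (∑ j, θstar j * z.1 j)) ^ 2) ^ 2 ∂P := by
    intro i
    have h := integral_map (φ := fun d : Fin n → (Fin p → ℝ) × ℝ => d i)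
      (μ := Measure.pi fun _ : Fin n => P)
      (measurable_pi_apply i).aemeasurable
      (f := fun z : (Fin p → ℝ) × ℝ =>
        (-(z.2 - f (∑ j, θ j * z.1 j)) ^ 2 + (z.2 - fstar (∑ j, θstar j * z.1 j)) ^ 2) ^ 2)
      (hTmeas.aestronglyMeasurable
        (μ := Measure.map (fun d : Fin n → (Fin p → ℝ) × ℝ => d i)
          (Measure.pi fun _ : Fin n => P)))
    rw [hmap i] at h
    exact h.symm
  have hDnn : 0 ≤ ∫ z, (fstar (∑ j, θstar j * z.1 j) - f (∑ j, θ j * z.1 j)) ^ 2 ∂P :=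
    integral_nonneg fun z => sq_nonneg _
  have hK : (0:ℝ) ≤ (2 * C + 1) ^ 2 + 4 * σ ^ 2 := by positivity
  calc ∑ i : Fin n,
        ∫ d, (-((d i).2 - f (∑ j, θ j * (d i).1 j)) ^ 2 +
              ((d i).2 - fstar (∑ j, θstar j * (d i).1 j)) ^ 2) ^ 2
          ∂(Measure.pi fun _ : Fin n => P)
      = ∑ _i : Fin n,
        ∫ z, (-(z.2 - f (∑ j, θ j * z.1 j)) ^ 2 + (z.2 - fstar (∑ j, θstar j * z.1 j)) ^ 2) ^ 2 ∂P :=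
        Finset.sum_congr rfl fun i _ => heach i
  _ = (n : ℝ) * ∫ z, (-(z.2 - f (∑ j, θ j * z.1 j)) ^ 2 + (z.2 - fstar (∑ j, θstar j * z.1 j)) ^ 2) ^ 2 ∂P := by
      rw [Finset.sum_const, Finset.card_univ, Fintype.card_fin, nsmul_eq_mul]
  _ ≤ (n : ℝ) * (((2 * C + 1) ^ 2 + 4 * σ ^ 2) *
        ∫ z, (fstar (∑ j, θstar j * z.1 j) - f (∑ j, θ j * z.1 j)) ^ 2 ∂P) :=
      mul_le_mul_of_nonneg_left hT2 (Nat.cast_nonneg n)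
  _ ≤ 2 * n * ((2 * C + 1) ^ 2 + 4 * σ ^ 2) * (quadRisk P θ f - quadRisk P θstar fstar) := by
      rw [hRR]
      nlinarith [mul_nonneg (mul_nonneg (Nat.cast_nonneg n : (0:ℝ) ≤ (n:ℝ)) hK) hDnn]
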